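/- Let X be a finite connected multigraph with minimum degree 2. Then for all vertices x, y, the Cesàro averages (1/n)∑_{k=1}^{n} q^(k)(x,y) of the vertex non-backtracking random walk transition probabilities converge to deg(y)/|E(X)|, where |E(X)| is the number of oriented edges (twice the number of undirected edges). -/

import Mathlib

open scoped BigOperators
open Filter

/-- A multigraph given by its set of *oriented* edges. Each oriented edge `e`
has an initial vertex `tail e = e⁻`, a terminal vertex `head e = e⁺`, and a
reversal `bar e = ě` with `ě ≠ e` (loops are counted twice). Local finiteness
is built in. -/
structure Multigraph where
  V : Type
  E : Type
  tail : E → V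
  head : E → V
  bar : E → E
  bar_bar : ∀ e, bar (bar e) = e
  bar_ne : ∀ e, bar e ≠ e
  head_bar : ∀ e, head (bar e) = tail e
  locFin : ∀ x, {e | tail e = x}.Finite

namespace Multigraph
variable (G : Multigraph)

/-- The degree of a vertex: the number of oriented edges emanating from it. -/
noncomputable def deg (x : G.V) : ℕ := (G.locFin x).toFinset.card

/-- `e → f`: `f` may follow `e` in a non-backtracking walk. -/
def Step (e f : G.E) : Prop := G.tail f = G.head e ∧ f ≠ G.bar e

/-- `e ⇒ f`: there is a non-backtracking walk from `e` to `f`. -/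
def Reach : G.E → G.E → Prop := Relation.ReflTransGen G.Step

/-- One-step transition probabilities of the edge non-backtracking random walk. -/
noncomputable def q (e f : G.E) : ℝ :=
  open Classical in
  if G.Step e f then 1 / ((G.deg (G.head e) : ℝ) - 1) else 0

/-- `n`-step transition probabilities `q_E^(n)` of the edge NBRW. -/
noncomputable def qn (G : Multigraph) : ℕ → G.E → G.E → ℝ
  | 0, e, f => open Classical in if e = f then 1 else 0
  | n + 1, e, f => ∑' g : G.E, qn G n e g * G.q g f

/-- Vertex NBRW transition probabilities:
`q^(n)(x,y) = (1/deg x) ∑_{e⁺=x, f⁺=y} q_E^(n)(e,f)`. -/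
noncomputable def qv (n : ℕ) (x y : G.V) : ℝ :=
  (1 / (G.deg x : ℝ)) *
    ∑' (e : {e : G.E // G.head e = x}) (f : {f : G.E // G.head f = y}),
      G.qn n e.1 f.1

def Adj (x y : G.V) : Prop := ∃ e : G.E, G.tail e = x ∧ G.head e = y

def Connected : Prop := ∀ x y : G.V, Relation.ReflTransGen G.Adj x y

/-- There is a walk of length `n` from `x` to `y`. -/
def WalkLen (G : Multigraph) : ℕ → G.V → G.V → Prop
  | 0, x, y => x = y
  | n + 1, x, y => ∃ z, G.Adj x z ∧ WalkLen G n z y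

/-- Graph distance. -/
noncomputable def dist (x y : G.V) : ℕ := sInf {n | G.WalkLen n x y}

/-- A cycle: a nonempty list of distinct oriented edges, with distinct initial
vertices, such that consecutive edges (cyclically) form non-backtracking steps. -/
def IsCycle (l : List G.E) : Prop :=
  l ≠ [] ∧ l.Nodup ∧ (l.map G.tail).Nodup ∧ List.Chain' G.Step (l ++ l.take 1)

/-- Small cycles are dense: some radius `R` works for every ball. -/
def SmallCyclesDense : Prop :=
  ∃ R : ℕ, ∀ x : G.V, ∃ l : List G.E, G.IsCycle l ∧ ∀ e ∈ l, G.dist x (G.tail e) ≤ R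

/-- `X` is a (finite) cycle graph. -/
def IsCycleGraph : Prop := (Set.univ : Set G.V).Finite ∧ ∀ x, G.deg x = 2

def Bipartite : Prop := ∃ c : G.V → Bool, ∀ e : G.E, c (G.tail e) ≠ c (G.head e)

end Multigraph

section NBRWAux

open Finset Filter

attribute [local instance] Classical.propDecidable

namespace NBRW

variable (G : Multigraph) [Fintype G.E]

lemma tail_bar (e : G.E) : G.tail (G.bar e) = G.head e := by
  conv_rhs => rw [← G.bar_bar e, G.head_bar]

/-- Edges with head `x`. -/
noncomputable def Ah (x : G.V) : Finset G.E := univ.filter fun e => G.head e = x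

/-- Edges with tail `x`. -/
noncomputable def At (x : G.V) : Finset G.E := univ.filter fun e => G.tail e = x

lemma mem_Ah {x : G.V} {e : G.E} : e ∈ Ah G x ↔ G.head e = x := by simp [Ah]

lemma mem_At {x : G.V} {e : G.E} : e ∈ At G x ↔ G.tail e = x := by simp [At]

lemma deg_eq_card_At (x : G.V) : G.deg x = (At G x).card := by
  unfold Multigraph.deg
  congr 1
  ext e
  simp [At, Set.Finite.mem_toFinset]

lemma sum_bar_Ah (u : G.E → ℝ) (x : G.V) :
    ∑ e ∈ Ah G x, u (G.bar e) = ∑ e ∈ At G x, u e := by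
  refine Finset.sum_nbij' (fun e => G.bar e) (fun e => G.bar e) ?_ ?_ ?_ ?_ ?_
  · intro e he; rw [mem_Ah] at he; rw [mem_At, tail_bar, he]
  · intro e he; rw [mem_At] at he
    show G.bar e ∈ Ah G x
    rw [mem_Ah, G.head_bar]; exact he
  · intro e _; exact G.bar_bar e
  · intro e _; exact G.bar_bar e
  · intro e _; rfl

lemma card_Ah (x : G.V) : (Ah G x).card = G.deg x := by
  rw [deg_eq_card_At]
  refine Finset.card_bij' (fun e _ => G.bar e) (fun e _ => G.bar e) ?_ ?_ ?_ ?_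
  · intro e he; rw [mem_Ah] at he; rw [mem_At, tail_bar, he]
  · intro e he; rw [mem_At] at he
    show G.bar e ∈ Ah G x
    rw [mem_Ah, G.head_bar]; exact he
  · intro e _; exact G.bar_bar e
  · intro e _; exact G.bar_bar e

/-- The transition matrix of the edge NBRW. -/
noncomputable def Qm : Matrix G.E G.E ℝ := Matrix.of fun e f => G.q e f

lemma Qm_apply (e f : G.E) :
    Qm G e f = if G.Step e f then 1 / ((G.deg (G.head e) : ℝ) - 1) else 0 := by
  show G.q e f = _
  rw [Multigraph.q]

variable {G}

lemma degR_pos (hdeg : ∀ x, 2 ≤ G.deg x) (x : G.V) : (0:ℝ) < (G.deg x : ℝ) - 1 := by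
  have : (2:ℝ) ≤ (G.deg x : ℝ) := by exact_mod_cast hdeg x
  linarith

lemma Qm_nonneg (hdeg : ∀ x, 2 ≤ G.deg x) (e f : G.E) : 0 ≤ Qm G e f := by
  rw [Qm_apply]
  split
  · have := degR_pos hdeg (G.head e)
    positivity
  · exact le_rfl

lemma filter_step_row (e : G.E) :
    (univ.filter fun f => G.Step e f) = (At G (G.head e)).erase (G.bar e) := by
  ext f
  simp only [Finset.mem_filter, Finset.mem_univ, true_and]
  simp only [Finset.mem_filter, Finset.mem_univ, true_and, Finset.mem_erase, mem_At,
    Multigraph.Step]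
  tauto

lemma filter_step_col (f : G.E) :
    (univ.filter fun e => G.Step e f) = (Ah G (G.tail f)).erase (G.bar f) := by
  ext e
  simp only [Finset.mem_filter, Finset.mem_univ, true_and]
  simp only [Finset.mem_filter, Finset.mem_univ, true_and, Finset.mem_erase, mem_Ah,
    Multigraph.Step]
  constructor
  · rintro ⟨h1, h2⟩
    refine ⟨fun hbf => h2 ?_, h1.symm⟩
    rw [hbf, G.bar_bar]
  · rintro ⟨h1, h2⟩
    refine ⟨h2.symm, fun hfb => h1 ?_⟩
    rw [hfb, G.bar_bar]

lemma bar_mem_At (e : G.E) : G.bar e ∈ At G (G.head e) := by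
  rw [mem_At, tail_bar]

lemma bar_mem_Ah (f : G.E) : G.bar f ∈ Ah G (G.tail f) := by
  rw [mem_Ah, G.head_bar]

lemma row_sum (hdeg : ∀ x, 2 ≤ G.deg x) (e : G.E) : ∑ f, Qm G e f = 1 := by
  have hne : ((G.deg (G.head e) : ℝ) - 1) ≠ 0 := ne_of_gt (degR_pos hdeg _)
  calc ∑ f, Qm G e f
      = ∑ f ∈ univ.filter fun f => G.Step e f, 1 / ((G.deg (G.head e) : ℝ) - 1) := by
        rw [Finset.sum_filter]
        exact Finset.sum_congr rfl fun f _ => Qm_apply G e f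
    _ = ((At G (G.head e)).erase (G.bar e)).card * (1 / ((G.deg (G.head e) : ℝ) - 1)) := by
        rw [filter_step_row, Finset.sum_const, nsmul_eq_mul]
    _ = 1 := by
        rw [Finset.card_erase_of_mem (bar_mem_At e), ← deg_eq_card_At]
        rw [Nat.cast_sub (le_trans (by norm_num) (hdeg (G.head e)))]
        field_simp
        norm_num

lemma col_sum (hdeg : ∀ x, 2 ≤ G.deg x) (f : G.E) : ∑ e, Qm G e f = 1 := by
  have hne : ((G.deg (G.tail f) : ℝ) - 1) ≠ 0 := ne_of_gt (degR_pos hdeg _)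
  calc ∑ e, Qm G e f
      = ∑ e ∈ univ.filter fun e => G.Step e f, 1 / ((G.deg (G.tail f) : ℝ) - 1) := by
        rw [Finset.sum_filter]
        refine Finset.sum_congr rfl fun e _ => ?_
        rw [Qm_apply]
        by_cases h : G.Step e f
        · rw [if_pos h, if_pos h, h.1]
        · rw [if_neg h, if_neg h]
    _ = ((Ah G (G.tail f)).erase (G.bar f)).card * (1 / ((G.deg (G.tail f) : ℝ) - 1)) := by
        rw [filter_step_col, Finset.sum_const, nsmul_eq_mul]
    _ = 1 := by
        rw [Finset.card_erase_of_mem (bar_mem_Ah f), card_Ah]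
        rw [Nat.cast_sub (le_trans (by norm_num) (hdeg (G.tail f)))]
        field_simp
        norm_num

/-- (★): row fixed-point equation. -/
lemma star_eq (hdeg : ∀ x, 2 ≤ G.deg x) (u : G.E → ℝ)
    (hrow : ∀ e, ∑ f, Qm G e f * u f = u e) (e : G.E) :
    (∑ f ∈ At G (G.head e), u f) - u (G.bar e) = ((G.deg (G.head e) : ℝ) - 1) * u e := by
  have hne : ((G.deg (G.head e) : ℝ) - 1) ≠ 0 := ne_of_gt (degR_pos hdeg _)
  have h := hrow e
  have h2 : ∑ f, Qm G e f * u f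
      = (1 / ((G.deg (G.head e) : ℝ) - 1)) * ((∑ f ∈ At G (G.head e), u f) - u (G.bar e)) := by
    calc ∑ f, Qm G e f * u f
        = ∑ f ∈ univ.filter fun f => G.Step e f, (1 / ((G.deg (G.head e) : ℝ) - 1)) * u f := by
          rw [Finset.sum_filter]
          refine Finset.sum_congr rfl fun f _ => ?_
          rw [Qm_apply]
          by_cases hs : G.Step e f
          · rw [if_pos hs, if_pos hs]
          · rw [if_neg hs, if_neg hs, zero_mul]
      _ = (1 / ((G.deg (G.head e) : ℝ) - 1)) * ∑ f ∈ (At G (G.head e)).erase (G.bar e), u f := by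
          rw [filter_step_row, Finset.mul_sum]
      _ = _ := by rw [Finset.sum_erase_eq_sub (bar_mem_At e)]
  rw [h2] at h
  field_simp at h
  linarith

/-- (†): column fixed-point equation. -/
lemma dagger_eq (hdeg : ∀ x, 2 ≤ G.deg x) (u : G.E → ℝ)
    (hcol : ∀ f, ∑ e, Qm G e f * u e = u f) (f : G.E) :
    (∑ e ∈ Ah G (G.tail f), u e) - u (G.bar f) = ((G.deg (G.tail f) : ℝ) - 1) * u f := by
  have hne : ((G.deg (G.tail f) : ℝ) - 1) ≠ 0 := ne_of_gt (degR_pos hdeg _)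
  have h := hcol f
  have h2 : ∑ e, Qm G e f * u e
      = (1 / ((G.deg (G.tail f) : ℝ) - 1)) * ((∑ e ∈ Ah G (G.tail f), u e) - u (G.bar f)) := by
    calc ∑ e, Qm G e f * u e
        = ∑ e ∈ univ.filter fun e => G.Step e f, (1 / ((G.deg (G.tail f) : ℝ) - 1)) * u e := by
          rw [Finset.sum_filter]
          refine Finset.sum_congr rfl fun e _ => ?_
          rw [Qm_apply]
          by_cases hs : G.Step e f
          · rw [if_pos hs, if_pos hs, hs.1]
          · rw [if_neg hs, if_neg hs, zero_mul]
      _ = (1 / ((G.deg (G.tail f) : ℝ) - 1)) * ∑ e ∈ (Ah G (G.tail f)).erase (G.bar f), u e := by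
          rw [filter_step_col, Finset.mul_sum]
      _ = _ := by rw [Finset.sum_erase_eq_sub (bar_mem_Ah f)]
  rw [h2] at h
  field_simp at h
  linarith

/-- For a fixed vector, head-sums equal tail-sums. -/
lemma head_sum_eq_tail_sum (hdeg : ∀ x, 2 ≤ G.deg x) (u : G.E → ℝ)
    (hrow : ∀ e, ∑ f, Qm G e f * u f = u e) (x : G.V) :
    ∑ e ∈ Ah G x, u e = ∑ e ∈ At G x, u e := by
  have hne : ((G.deg x : ℝ) - 1) ≠ 0 := ne_of_gt (degR_pos hdeg _)
  have H : ∑ e ∈ Ah G x, ((∑ f ∈ At G x, u f) - u (G.bar e))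
      = ∑ e ∈ Ah G x, ((G.deg x : ℝ) - 1) * u e := by
    refine Finset.sum_congr rfl fun e he => ?_
    have hx : G.head e = x := (mem_Ah G).mp he
    have := star_eq hdeg u hrow e
    rw [hx] at this
    exact this
  rw [Finset.sum_sub_distrib, Finset.sum_const, sum_bar_Ah, card_Ah, ← Finset.mul_sum] at H
  rw [nsmul_eq_mul] at H
  apply mul_left_cancel₀ hne
  linear_combination -H

/-- The key structural identity along an edge. -/
lemma edge_ratio (hdeg : ∀ x, 2 ≤ G.deg x) (u : G.E → ℝ)
    (hrow : ∀ e, ∑ f, Qm G e f * u f = u e)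
    (hcol : ∀ f, ∑ e, Qm G e f * u e = u f) (e : G.E) :
    (∑ f ∈ Ah G (G.head e), u f) * (G.deg (G.tail e) : ℝ)
      = (∑ f ∈ Ah G (G.tail e), u f) * (G.deg (G.head e) : ℝ) := by
  set a := u e with ha
  set b := u (G.bar e) with hb
  set p := (G.deg (G.head e) : ℝ) with hp
  set q := (G.deg (G.tail e) : ℝ) with hq
  set sh := ∑ f ∈ Ah G (G.head e), u f with hsh
  set st := ∑ f ∈ Ah G (G.tail e), u f with hst
  -- eq1 : sh - b = (p-1) a
  have eq1 : sh - b = (p - 1) * a := by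
    have h := star_eq hdeg u hrow e
    rw [← head_sum_eq_tail_sum hdeg u hrow] at h
    exact h
  -- eq2 : st - a = (q-1) b
  have eq2 : st - a = (q - 1) * b := by
    have h := star_eq hdeg u hrow (G.bar e)
    rw [G.head_bar, G.bar_bar, ← head_sum_eq_tail_sum hdeg u hrow] at h
    exact h
  -- eq3 : st - b = (q-1) a
  have eq3 : st - b = (q - 1) * a := dagger_eq hdeg u hcol e
  -- eq4 : sh - a = (p-1) b
  have eq4 : sh - a = (p - 1) * b := by
    have h := dagger_eq hdeg u hcol (G.bar e)
    rw [tail_bar, G.bar_bar] at h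
    exact h
  by_cases hab : a = b
  · have h1 : sh = p * a := by rw [← hab] at eq1; linear_combination eq1
    have h2 : st = q * a := by rw [← hab] at eq2; linear_combination eq2
    rw [h1, h2]; ring
  · have hp2 : p = 2 := by
      have h : (p - 2) * (a - b) = 0 := by linear_combination eq4 - eq1
      rcases mul_eq_zero.mp h with h' | h'
      · linarith
      · exact absurd (sub_eq_zero.mp h') hab
    have hq2 : q = 2 := by
      have h : (q - 2) * (b - a) = 0 := by linear_combination eq3 - eq2
      rcases mul_eq_zero.mp h with h' | h'
      · linarith
      · exact absurd (sub_eq_zero.mp h').symm hab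
    have h1 : sh = a + b := by rw [hp2] at eq1; linarith
    have h2 : st = a + b := by rw [hq2] at eq3; linarith
    rw [h1, h2, hp2, hq2]

/-- Head-sums of a doubly-fixed vector are proportional to degrees. -/
lemma s_prop (hdeg : ∀ x, 2 ≤ G.deg x) (hconn : G.Connected) (u : G.E → ℝ)
    (hrow : ∀ e, ∑ f, Qm G e f * u f = u e)
    (hcol : ∀ f, ∑ e, Qm G e f * u e = u f) (x y : G.V) :
    (∑ e ∈ Ah G x, u e) * (G.deg y : ℝ) = (∑ e ∈ Ah G y, u e) * (G.deg x : ℝ) := by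
  have h := hconn x y
  induction h with
  | refl => rfl
  | @tail b c hxb hbc ih =>
    obtain ⟨e, hte, hhe⟩ := hbc
    have hedge := edge_ratio hdeg u hrow hcol e
    rw [hte, hhe] at hedge
    have hbne : (G.deg b : ℝ) ≠ 0 := by
      have := degR_pos hdeg b; linarith
    apply mul_left_cancel₀ hbne
    linear_combination (G.deg c : ℝ) * ih - (G.deg x : ℝ) * hedge

/-- Doubly stochastic: any row-fixed vector is column-fixed. -/
lemma col_fix (hdeg : ∀ x, 2 ≤ G.deg x) (u : G.E → ℝ)
    (hrow : ∀ e, ∑ f, Qm G e f * u f = u e) (f : G.E) :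
    ∑ e, Qm G e f * u e = u f := by
  set w : G.E → ℝ := fun f => ∑ e, Qm G e f * u e with hw
  have hCS : ∀ f, (w f)^2 ≤ ∑ e, Qm G e f * (u e)^2 := by
    intro f
    have h := Finset.sum_mul_sq_le_sq_mul_sq univ (fun e => Real.sqrt (Qm G e f))
      (fun e => Real.sqrt (Qm G e f) * u e)
    have e1 : ∑ e, Real.sqrt (Qm G e f) * (Real.sqrt (Qm G e f) * u e) = w f := by
      refine Finset.sum_congr rfl fun e _ => ?_
      rw [← mul_assoc, Real.mul_self_sqrt (Qm_nonneg hdeg e f)]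
    have e2 : ∑ e, Real.sqrt (Qm G e f) ^ 2 = 1 := by
      rw [← col_sum hdeg f]
      exact Finset.sum_congr rfl fun e _ => Real.sq_sqrt (Qm_nonneg hdeg e f)
    have e3 : ∑ e, (Real.sqrt (Qm G e f) * u e)^2 = ∑ e, Qm G e f * (u e)^2 := by
      refine Finset.sum_congr rfl fun e _ => ?_
      rw [mul_pow, Real.sq_sqrt (Qm_nonneg hdeg e f)]
    rw [e1, e2, e3, one_mul] at h
    exact h
  have hsum_sq : ∑ g, (w g)^2 ≤ ∑ e, (u e)^2 := by
    calc ∑ g, (w g)^2 ≤ ∑ g, ∑ e, Qm G e g * (u e)^2 :=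
          Finset.sum_le_sum fun g _ => hCS g
      _ = ∑ e, ∑ g, Qm G e g * (u e)^2 := Finset.sum_comm
      _ = ∑ e, (u e)^2 := by
          refine Finset.sum_congr rfl fun e _ => ?_
          rw [← Finset.sum_mul, row_sum hdeg e, one_mul]
  have hinner : ∑ g, w g * u g = ∑ e, (u e)^2 := by
    calc ∑ g, w g * u g = ∑ g, ∑ e, Qm G e g * u e * u g := by
          refine Finset.sum_congr rfl fun g _ => ?_
          rw [hw, Finset.sum_mul]
      _ = ∑ e, ∑ g, Qm G e g * u e * u g := Finset.sum_comm
      _ = ∑ e, u e * ∑ g, Qm G e g * u g := by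
          refine Finset.sum_congr rfl fun e _ => ?_
          rw [Finset.mul_sum]
          exact Finset.sum_congr rfl fun g _ => by ring
      _ = ∑ e, (u e)^2 := by
          refine Finset.sum_congr rfl fun e _ => ?_
          rw [hrow e]; ring
  have hexp : ∑ g, (w g - u g)^2
      = ∑ g, (w g)^2 - 2 * (∑ g, w g * u g) + ∑ g, (u g)^2 := by
    rw [Finset.mul_sum, ← Finset.sum_sub_distrib, ← Finset.sum_add_distrib]
    exact Finset.sum_congr rfl fun g _ => by ring
  have hzero : ∑ g, (w g - u g)^2 ≤ 0 := by
    rw [hexp, hinner]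
    linarith
  have hzero' : ∑ g, (w g - u g)^2 = 0 :=
    le_antisymm hzero (Finset.sum_nonneg fun g _ => sq_nonneg _)
  have := (Finset.sum_eq_zero_iff_of_nonneg fun g _ => sq_nonneg (w g - u g)).mp hzero' f
    (Finset.mem_univ f)
  have h0 : w f - u f = 0 := by
    have := sq_eq_zero_iff.mp this
    exact this
  have : w f = u f := by linarith
  exact this

/-- The final proportionality: `s(x)·|E| = (∑ u)·deg x`. -/
lemma s_value [Fintype G.V] (hdeg : ∀ x, 2 ≤ G.deg x) (hconn : G.Connected) (u : G.E → ℝ)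
    (hrow : ∀ e, ∑ f, Qm G e f * u f = u e)
    (hcol : ∀ f, ∑ e, Qm G e f * u e = u f) (x : G.V) :
    (∑ e ∈ Ah G x, u e) * (Fintype.card G.E : ℝ) = (∑ e, u e) * (G.deg x : ℝ) := by
  have hcard : (Fintype.card G.E : ℝ) = ∑ z : G.V, (G.deg z : ℝ) := by
    have h : (univ : Finset G.E).card = ∑ z : G.V, (At G z).card :=
      Finset.card_eq_sum_card_fiberwise fun e _ => Finset.mem_univ (G.tail e)
    rw [Fintype.card]
    push_cast [h]
    exact Finset.sum_congr rfl fun z _ => by rw [← deg_eq_card_At]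
  have hsum : ∑ z : G.V, (∑ e ∈ Ah G z, u e) = ∑ e, u e := by
    exact Finset.sum_fiberwise univ (fun e => G.head e) u
  calc (∑ e ∈ Ah G x, u e) * (Fintype.card G.E : ℝ)
      = ∑ z : G.V, (∑ e ∈ Ah G x, u e) * (G.deg z : ℝ) := by
        rw [hcard, Finset.mul_sum]
    _ = ∑ z : G.V, (∑ e ∈ Ah G z, u e) * (G.deg x : ℝ) :=
        Finset.sum_congr rfl fun z _ => s_prop hdeg hconn u hrow hcol x z
    _ = (∑ e, u e) * (G.deg x : ℝ) := by rw [← Finset.sum_mul, hsum]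

/-! ### The operator -/

variable (G)

/-- The NBRW transition operator on `EuclideanSpace ℝ G.E`. -/
noncomputable def Tlin : EuclideanSpace ℝ G.E →ₗ[ℝ] EuclideanSpace ℝ G.E where
  toFun v := WithLp.toLp 2 (fun e => ∑ f, Qm G e f * v f)
  map_add' v w := by
    ext e
    simp only [PiLp.add_apply]
    rw [← Finset.sum_add_distrib]
    exact Finset.sum_congr rfl fun f _ => by ring
  map_smul' c v := by
    ext e
    simp only [PiLp.smul_apply, RingHom.id_apply, smul_eq_mul, Finset.mul_sum]
    exact Finset.sum_congr rfl fun f _ => by ring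

noncomputable def Top : EuclideanSpace ℝ G.E →L[ℝ] EuclideanSpace ℝ G.E :=
  LinearMap.toContinuousLinearMap (Tlin G)

lemma Top_apply (v : EuclideanSpace ℝ G.E) (e : G.E) :
    Top G v e = ∑ f, Qm G e f * v f := rfl

variable {G}

lemma Top_norm (hdeg : ∀ x, 2 ≤ G.deg x) : ‖Top G‖ ≤ 1 := by
  refine ContinuousLinearMap.opNorm_le_bound _ zero_le_one fun v => ?_
  rw [one_mul, EuclideanSpace.norm_eq, EuclideanSpace.norm_eq]
  apply Real.sqrt_le_sqrt
  have key : ∀ e, ‖Top G v e‖^2 ≤ ∑ f, Qm G e f * (v f)^2 := by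
    intro e
    have h := Finset.sum_mul_sq_le_sq_mul_sq univ (fun f => Real.sqrt (Qm G e f))
      (fun f => Real.sqrt (Qm G e f) * v f)
    have e1 : ∑ f, Real.sqrt (Qm G e f) * (Real.sqrt (Qm G e f) * v f)
        = ∑ f, Qm G e f * v f := by
      refine Finset.sum_congr rfl fun f _ => ?_
      rw [← mul_assoc, Real.mul_self_sqrt (Qm_nonneg hdeg e f)]
    have e2 : ∑ f, Real.sqrt (Qm G e f) ^ 2 = 1 := by
      rw [← row_sum hdeg e]
      exact Finset.sum_congr rfl fun f _ => Real.sq_sqrt (Qm_nonneg hdeg e f)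
    have e3 : ∑ f, (Real.sqrt (Qm G e f) * v f)^2 = ∑ f, Qm G e f * (v f)^2 := by
      refine Finset.sum_congr rfl fun f _ => ?_
      rw [mul_pow, Real.sq_sqrt (Qm_nonneg hdeg e f)]
    rw [e1, e2, e3, one_mul] at h
    rw [Top_apply, Real.norm_eq_abs, sq_abs]
    exact h
  calc ∑ e, ‖Top G v e‖^2 ≤ ∑ e, ∑ f, Qm G e f * (v f)^2 :=
        Finset.sum_le_sum fun e _ => key e
    _ = ∑ f, ∑ e, Qm G e f * (v f)^2 := Finset.sum_comm
    _ = ∑ f, ‖v f‖^2 := by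
        refine Finset.sum_congr rfl fun f _ => ?_
        rw [← Finset.sum_mul, col_sum hdeg f, one_mul, Real.norm_eq_abs, sq_abs]

lemma Top_iter (k : ℕ) (v : EuclideanSpace ℝ G.E) (e : G.E) :
    ((Top G)^[k] v) e = ∑ f, (Qm G ^ k) e f * v f := by
  induction k generalizing e with
  | zero =>
    simp only [Function.iterate_zero, id_eq, pow_zero, Matrix.one_apply, ite_mul, one_mul,
      zero_mul]
    simp [Finset.sum_ite_eq]
  | succ k ih =>
    rw [Function.iterate_succ_apply', Top_apply]
    have : ∀ f, ((Top G)^[k] v) f = ∑ g, (Qm G ^ k) f g * v g := fun f => ih f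
    calc ∑ f, Qm G e f * ((Top G)^[k] v) f
        = ∑ f, Qm G e f * ∑ g, (Qm G ^ k) f g * v g := by
          exact Finset.sum_congr rfl fun f _ => by rw [this f]
      _ = ∑ f, ∑ g, Qm G e f * (Qm G ^ k) f g * v g := by
          refine Finset.sum_congr rfl fun f _ => ?_
          rw [Finset.mul_sum]
          exact Finset.sum_congr rfl fun g _ => by ring
      _ = ∑ g, ∑ f, Qm G e f * (Qm G ^ k) f g * v g := Finset.sum_comm
      _ = ∑ g, (Qm G ^ (k+1)) e g * v g := by
          refine Finset.sum_congr rfl fun g _ => ?_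
          rw [pow_succ', Matrix.mul_apply, Finset.sum_mul]

lemma qn_eq (n : ℕ) (e f : G.E) : G.qn n e f = (Qm G ^ n) e f := by
  induction n generalizing e f with
  | zero =>
    rw [Multigraph.qn, pow_zero, Matrix.one_apply]
  | succ n ih =>
    rw [Multigraph.qn, tsum_fintype, pow_succ, Matrix.mul_apply]
    refine Finset.sum_congr rfl fun g _ => ?_
    rw [ih]
    rfl

lemma qv_eq (k : ℕ) (x y : G.V) :
    G.qv k x y = (1 / (G.deg x : ℝ)) * ∑ e ∈ Ah G x, ∑ f ∈ Ah G y, G.qn k e f := by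
  rw [Multigraph.qv]
  congr 1
  rw [tsum_fintype]
  have h1 : ∀ e : {e : G.E // G.head e = x},
      (∑' f : {f : G.E // G.head f = y}, G.qn k e.1 f.1)
        = ∑ f ∈ Ah G y, G.qn k e.1 f := by
    intro e
    rw [tsum_fintype]
    exact (Finset.sum_subtype (Ah G y) (fun f => mem_Ah G) (fun f => G.qn k e.1 f)).symm
  rw [Finset.sum_congr rfl fun e _ => h1 e]
  exact (Finset.sum_subtype (Ah G x) (fun e => mem_Ah G)
    (fun e => ∑ f ∈ Ah G y, G.qn k e f)).symm

lemma sum_Icc_one (g : ℕ → ℝ) (n : ℕ) :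
    ∑ k ∈ Finset.Icc 1 n, g k = ∑ k ∈ Finset.range n, g (k + 1) := by
  induction n with
  | zero => simp
  | succ n ih =>
    rw [Finset.sum_Icc_succ_top (Nat.succ_le_succ (Nat.zero_le n)), ih,
      Finset.sum_range_succ]

end NBRW
end NBRWAux

open Finset Filter NBRW Topology in
/-- Cesàro convergence of vertex NBRW transition probabilities for a
finite connected multigraph with minimum degree 2:
`(1/n) ∑_{k=1}^n q^(k)(x,y) → deg(y)/|E(X)|`. -/
theorem nbrw_cesaro_limit (G : Multigraph) [Fintype G.V] [Fintype G.E]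
    (hconn : G.Connected) (hdeg : ∀ x, 2 ≤ G.deg x) :
    ∀ x y : G.V,
      Filter.Tendsto
        (fun n : ℕ => (1 / (n : ℝ)) * ∑ k ∈ Finset.Icc 1 n, G.qv k x y)
        Filter.atTop (nhds ((G.deg y : ℝ) / (Fintype.card G.E : ℝ))) := by
  classical
  intro x y
  have hdx : (0:ℝ) < (G.deg x : ℝ) := by
    have := degR_pos hdeg x; linarith
  have hcardE : (0:ℝ) < (Fintype.card G.E : ℝ) := by
    have h1 : 0 < (Ah G x).card := by
      rw [card_Ah]
      exact lt_of_lt_of_le (by norm_num) (hdeg x)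
    have h2 : (Ah G x).card ≤ Fintype.card G.E := by
      rw [← Finset.card_univ]
      exact Finset.card_le_univ _
    exact_mod_cast lt_of_lt_of_le h1 h2
  set T := Top G with hTdef
  have hTnorm : ‖T‖ ≤ 1 := Top_norm hdeg
  set vy : EuclideanSpace ℝ G.E := WithLp.toLp 2 (fun f => if G.head f = y then (1:ℝ) else 0) with hvy
  obtain ⟨u, hbirk, hufix, hperp⟩ :
      ∃ u : EuclideanSpace ℝ G.E,
        Tendsto (fun n => birkhoffAverage ℝ (⇑T) _root_.id n vy) atTop (𝓝 u) ∧
        T u = u ∧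
        ∀ w : EuclideanSpace ℝ G.E, T w = w → inner (𝕜 := ℝ) w (vy - u) = 0 := by
    refine ⟨_, T.tendsto_birkhoffAverage_orthogonalProjection hTnorm vy, ?_, ?_⟩
    · have h1 := LinearMap.mem_eqLocus.mp (SetLike.coe_mem
        ((LinearMap.eqLocus (T : EuclideanSpace ℝ G.E →ₗ[ℝ] EuclideanSpace ℝ G.E) 1).orthogonalProjectionOnto vy))
      exact h1
    · intro w hw
      have h := Submodule.sub_starProjection_mem_orthogonal
        (K := LinearMap.eqLocus (T : EuclideanSpace ℝ G.E →ₗ[ℝ] EuclideanSpace ℝ G.E) 1) vy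
      exact (Submodule.mem_orthogonal _ _).mp h w
        (LinearMap.mem_eqLocus.mpr (by simpa using hw))
  have hrow : ∀ e, ∑ f, Qm G e f * u f = u e := fun e =>
    congrArg (fun w : EuclideanSpace ℝ G.E => w e) hufix
  have hcol : ∀ f, ∑ e, Qm G e f * u e = u f := col_fix hdeg u hrow
  -- the all-ones vector is fixed
  have hones : T (WithLp.toLp 2 (fun _ => (1:ℝ))) = WithLp.toLp 2 (fun _ => (1:ℝ)) := by
    ext e
    show ∑ f, Qm G e f * (1:ℝ) = 1
    simp only [mul_one]
    exact row_sum hdeg e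
  have hsumu : ∑ e, u e = (G.deg y : ℝ) := by
    have h0 := hperp _ hones
    have h1 : ∑ e, (vy e - u e) = 0 := by
      simpa [PiLp.inner_apply, RCLike.inner_apply] using h0
    have h2 : ∑ e, vy e = (G.deg y : ℝ) := by
      simp only [hvy]
      rw [Finset.sum_boole]
      rw [show (univ.filter fun e => G.head e = y) = Ah G y from rfl, card_Ah]
    rw [Finset.sum_sub_distrib, h2] at h1
    linarith
  have hval := s_value hdeg hconn u hrow hcol x
  rw [hsumu] at hval
  have hvalue : (1/(G.deg x : ℝ)) * ∑ e ∈ Ah G x, u e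
      = (G.deg y : ℝ) / (Fintype.card G.E : ℝ) := by
    field_simp
    linear_combination hval
  have hTcont : Tendsto (fun n => T (birkhoffAverage ℝ (⇑T) _root_.id n vy)) atTop
      (𝓝 (T u)) := (T.continuous.tendsto u).comp hbirk
  rw [hufix] at hTcont
  have hsumlim : Tendsto (fun n => (1/(G.deg x : ℝ)) * ∑ e ∈ Ah G x,
      (EuclideanSpace.proj e) (T (birkhoffAverage ℝ (⇑T) _root_.id n vy))) atTop
      (𝓝 ((G.deg y : ℝ) / (Fintype.card G.E : ℝ))) := by
    rw [← hvalue]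
    refine Tendsto.const_mul _ ?_
    have h : ∀ e ∈ Ah G x, Tendsto (fun n => (EuclideanSpace.proj e)
        (T (birkhoffAverage ℝ (⇑T) _root_.id n vy))) atTop (𝓝 (u e)) := by
      intro e _
      exact ((EuclideanSpace.proj (𝕜 := ℝ) e).continuous.tendsto u).comp hTcont
    exact tendsto_finset_sum _ h
  refine hsumlim.congr fun n => ?_
  -- coordinate formula for the averaged operator
  have hproj : ∀ e : G.E, (EuclideanSpace.proj e) (T (birkhoffAverage ℝ (⇑T) _root_.id n vy))
      = (n:ℝ)⁻¹ * ∑ k ∈ Finset.range n, ∑ f ∈ Ah G y, G.qn (k+1) e f := by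
    intro e
    have hTbA : T (birkhoffAverage ℝ (⇑T) _root_.id n vy)
        = (n:ℝ)⁻¹ • ∑ k ∈ Finset.range n, (⇑T)^[k+1] vy := by
      rw [birkhoffAverage, birkhoffSum, map_smul, map_sum]
      congr 1
      refine Finset.sum_congr rfl fun k _ => ?_
      rw [id_eq]
      exact (Function.iterate_succ_apply' (⇑T) k vy).symm
    rw [hTbA, map_smul, map_sum, smul_eq_mul]
    congr 1
    refine Finset.sum_congr rfl fun k _ => ?_
    show ((⇑T)^[k+1] vy) e = _
    rw [hTdef, Top_iter]
    simp only [hvy, mul_ite, mul_one, mul_zero]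
    rw [← Finset.sum_filter]
    exact Finset.sum_congr rfl fun f _ => (qn_eq (k+1) e f).symm
  have hL : (1/(G.deg x : ℝ)) * ∑ e ∈ Ah G x,
        (EuclideanSpace.proj e) (T (birkhoffAverage ℝ (⇑T) _root_.id n vy))
      = (1/(G.deg x : ℝ)) * ((n:ℝ)⁻¹ *
          ∑ k ∈ Finset.range n, ∑ e ∈ Ah G x, ∑ f ∈ Ah G y, G.qn (k+1) e f) := by
    rw [Finset.sum_congr rfl fun e _ => hproj e, ← Finset.mul_sum, Finset.sum_comm]
  have hR : (1/(n:ℝ)) * ∑ k ∈ Finset.Icc 1 n, G.qv k x y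
      = (1/(n:ℝ)) * ((1/(G.deg x : ℝ)) *
          ∑ k ∈ Finset.range n, ∑ e ∈ Ah G x, ∑ f ∈ Ah G y, G.qn (k+1) e f) := by
    rw [sum_Icc_one (fun k => G.qv k x y) n,
      Finset.sum_congr rfl fun k _ => qv_eq (k+1) x y, ← Finset.mul_sum]
  rw [hL, hR]
  ring
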